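/- Fix r ∈ (0,1), let b(z) = (z − r)/(1 − rz), and define G(z) = (1/√2)(z², b(z)²) ∈ C², a map from the open unit disc D into the open unit ball B_2 of C². Then G is not bi-Lipschitz with respect to the pseudohyperbolic metrics: there is no constant c ≥ 1 such that c^{-1} d_D(z,w) ≤ d_ph(G(z), G(w)) ≤ c · d_D(z,w) for all z, w ∈ D, where d_D(z,w) = |z − w|/|1 − conj(w)z| is the pseudohyperbolic distance on D and d_ph is the pseudohyperbolic distance on B_2. -/

import Mathlib

open Metric

noncomputable section

open scoped Classical

/-- The projection `P_ν z = (⟨z,ν⟩/⟨ν,ν⟩)ν` (with the paper's inner product, linear in the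
first variable, i.e. `⟪ν, z⟫_ℂ` in Mathlib's convention), and `P_0 = 0`. -/
def ballProj (ν z : EuclideanSpace ℂ (Fin 2)) : EuclideanSpace ℂ (Fin 2) :=
  if ν = 0 then 0 else ((inner ℂ ν z : ℂ) / (inner ℂ ν ν : ℂ)) • ν

/-- The Möbius map `Φ_ν(z) = (ν − P_ν z − s_ν Q_ν z)/(1 − ⟨z,ν⟩)` of the open unit ball
of `ℂ²`. -/
def ballMobius (ν z : EuclideanSpace ℂ (Fin 2)) : EuclideanSpace ℂ (Fin 2) :=
  (1 - (inner ℂ ν z : ℂ))⁻¹ •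
    (ν - ballProj ν z - (Real.sqrt (1 - ‖ν‖ ^ 2) : ℂ) • (z - ballProj ν z))

/-- The pseudohyperbolic distance `d_ph(μ,ν) = ‖Φ_ν(μ)‖` on the open unit ball of `ℂ²`. -/
def pseudohyperbolicDist (μ ν : EuclideanSpace ℂ (Fin 2)) : ℝ := ‖ballMobius ν μ‖

/-- The pseudohyperbolic distance on the unit disc. -/
def discDist (z w : ℂ) : ℝ := ‖z - w‖ / ‖1 - (starRingEnd ℂ w) * z‖

set_option maxHeartbeats 1000000

def V (a b : ℝ) : EuclideanSpace ℂ (Fin 2) :=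
  (WithLp.equiv 2 (Fin 2 → ℂ)).symm ![(a:ℂ), (b:ℂ)]

lemma inner_V (a b c d : ℝ) : (inner ℂ (V a b) (V c d) : ℂ) = ((a*c + b*d : ℝ) : ℂ) := by
  simp [V, PiLp.inner_apply, Fin.sum_univ_two, WithLp.equiv_symm_apply]
  ring

lemma norm_V_sq (a b : ℝ) : ‖V a b‖^2 = a^2 + b^2 := by
  rw [EuclideanSpace.norm_eq, Real.sq_sqrt (by positivity)]
  simp [V, Fin.sum_univ_two, WithLp.equiv_symm_apply, Complex.norm_real, sq_abs]

lemma V_sub (a b c d : ℝ) : V a b - V c d = V (a-c) (b-d) := by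
  ext i; fin_cases i <;> simp [V, WithLp.equiv_symm_apply]

lemma V_smul (c a b : ℝ) : ((c:ℝ):ℂ) • V a b = V (c*a) (c*b) := by
  ext i; fin_cases i <;> simp [V, WithLp.equiv_symm_apply] <;> push_cast <;> ring

lemma V_ne_zero (a b : ℝ) (ha : a ≠ 0) : V a b ≠ 0 := by
  intro h
  have := congrFun (congrArg (WithLp.equiv 2 (Fin 2 → ℂ)) h) 0
  simp [V, WithLp.equiv_symm_apply] at this
  exact ha (by exact_mod_cast this)

lemma phd_formula (n0 n1 m0 m1 : ℝ) (h0 : n0 ≠ 0)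
    (hn1 : n0^2 + n1^2 ≤ 1) (hw : n0*m0 + n1*m1 ≠ 1) :
    (pseudohyperbolicDist (V m0 m1) (V n0 n1))^2 =
      1 - (1 - (m0^2+m1^2)) * (1 - (n0^2+n1^2)) / (1 - (n0*m0+n1*m1))^2 := by
  have hnpos : 0 < n0^2 + n1^2 := by positivity
  have hnne : n0^2 + n1^2 ≠ 0 := ne_of_gt hnpos
  have hνne : V n0 n1 ≠ 0 := V_ne_zero _ _ h0
  have hσ2 : (Real.sqrt (1 - (n0^2+n1^2)))^2 = 1 - (n0^2+n1^2) :=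
    Real.sq_sqrt (by linarith)
  have h1w : (1:ℝ) - (n0*m0+n1*m1) ≠ 0 := by
    intro h; exact hw (by linarith)
  set σ := Real.sqrt (1 - (n0^2+n1^2)) with hσdef
  have hproj : ballProj (V n0 n1) (V m0 m1) =
      V ((n0*m0+n1*m1)/(n0^2+n1^2)*n0) ((n0*m0+n1*m1)/(n0^2+n1^2)*n1) := by
    rw [ballProj, if_neg hνne, inner_V, inner_V,
      show ((n0*m0+n1*m1:ℝ):ℂ) / ((n0*n0+n1*n1:ℝ):ℂ)
        = (((n0*m0+n1*m1)/(n0^2+n1^2) : ℝ):ℂ) by push_cast; ring_nf,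
      V_smul]
  have hmob : ballMobius (V n0 n1) (V m0 m1) =
      V ((1-(n0*m0+n1*m1))⁻¹ * (n0 - (n0*m0+n1*m1)/(n0^2+n1^2)*n0
            - σ*(m0 - (n0*m0+n1*m1)/(n0^2+n1^2)*n0)))
        ((1-(n0*m0+n1*m1))⁻¹ * (n1 - (n0*m0+n1*m1)/(n0^2+n1^2)*n1
            - σ*(m1 - (n0*m0+n1*m1)/(n0^2+n1^2)*n1))) := by
    rw [ballMobius, hproj, inner_V, norm_V_sq, ← hσdef,
      V_sub m0 m1, V_smul σ, V_sub n0 n1, V_sub,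
      show (1 : ℂ) - ((n0*m0+n1*m1:ℝ):ℂ) = ((1 - (n0*m0+n1*m1) : ℝ):ℂ) by push_cast; ring,
      show (((1-(n0*m0+n1*m1):ℝ)):ℂ)⁻¹ = (((1-(n0*m0+n1*m1))⁻¹ : ℝ):ℂ) by push_cast; ring,
      V_smul]
  rw [pseudohyperbolicDist, hmob, norm_V_sq]
  set k := (n0*m0+n1*m1)/(n0^2+n1^2) with hkdef
  have hk : k*(n0^2+n1^2) = n0*m0+n1*m1 := by
    rw [hkdef]; field_simp
  have hXX : (n0 - k*n0 - σ*(m0 - k*n0))^2 + (n1 - k*n1 - σ*(m1 - k*n1))^2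
      = (1-(n0*m0+n1*m1))^2 - (1-(n0^2+n1^2))*(1-(m0^2+m1^2)) := by
    linear_combination ((m0-k*n0)^2+(m1-k*n1)^2) * hσ2
      + (2*σ*(1-k) + ((2-(n0^2+n1^2))*k - (2-(n0*m0+n1*m1)))) * hk
  rw [mul_pow, mul_pow, ← mul_add, hXX]
  field_simp

section Estimates
variable {r v bt bs : ℝ}

lemma bt_facts (hr0 : 0 < r) (hr1 : r < 1) (hv0 : 0 < v) (hv8 : v ≤ 1/8)
    (hbtq : bt*(1+r*v) = 1-v) : 0 < bt ∧ 1-2*v ≤ bt ∧ bt ≤ 1 := by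
  have hrv : 0 < r*v := mul_pos hr0 hv0
  have hp : (0:ℝ) < 1 + r*v := by linarith
  have hrvv : r*v ≤ v := by nlinarith [mul_pos (show (0:ℝ) < 1-r by linarith) hv0]
  refine ⟨?_, ?_, ?_⟩
  · have h1 : (0:ℝ) < bt*(1+r*v) := by rw [hbtq]; linarith
    by_contra hc
    push_neg at hc
    nlinarith [mul_nonneg (neg_nonneg.mpr hc) hp.le]
  · refine le_of_mul_le_mul_right ?_ hp
    rw [hbtq]
    nlinarith [mul_nonneg (mul_pos hr0 hv0).le hv0.le]
  · refine le_of_mul_le_mul_right ?_ hp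
    rw [hbtq]; linarith

lemma bs_facts (hr0 : 0 < r) (hr1 : r < 1) (hv0 : 0 < v) (hv8 : v ≤ 1/8)
    (hbsq : bs*(1-r*v) = 1-v) : 0 < bs ∧ 1-v ≤ bs ∧ bs ≤ 1 := by
  have hrv : 0 < r*v := mul_pos hr0 hv0
  have hrvv : r*v ≤ v := by nlinarith [mul_pos (show (0:ℝ) < 1-r by linarith) hv0]
  have hq : (0:ℝ) < 1 - r*v := by linarith
  refine ⟨?_, ?_, ?_⟩
  · have h1 : (0:ℝ) < bs*(1-r*v) := by rw [hbsq]; linarith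
    by_contra hc
    push_neg at hc
    nlinarith [mul_nonneg (neg_nonneg.mpr hc) hq.le]
  · refine le_of_mul_le_mul_right ?_ hq
    rw [hbsq]
    nlinarith [mul_nonneg (show (0:ℝ) ≤ 1-v by linarith) hrv.le]
  · refine le_of_mul_le_mul_right ?_ hq
    rw [hbsq]; linarith

lemma diff_facts (hr0 : 0 < r) (hr1 : r < 1) (hv0 : 0 < v) (hv8 : v ≤ 1/8)
    (hbtq : bt*(1+r*v) = 1-v) (hbsq : bs*(1-r*v) = 1-v) :
    2*r*v - 2*r*v^2 ≤ bs - bt ∧ bs - bt ≤ 2*r*v := by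
  have hv1 : (0:ℝ) < 1 - v := by linarith
  have hrv : 0 < r*v := mul_pos hr0 hv0
  have hrvv : r*v ≤ v := by nlinarith [mul_pos (show (0:ℝ) < 1-r by linarith) hv0]
  have hrv8 : r*v ≤ 1/8 := hrvv.trans hv8
  have hrvsq : r*v*(r*v) ≤ (1/8)*v := mul_le_mul hrv8 hrvv hrv.le (by norm_num)
  have h63 : (0:ℝ) < 1 - r^2*v^2 := by nlinarith [hrvsq]
  have hbsbt : (bs - bt)*(1-r^2*v^2) = 2*r*v*(1-v) := by
    linear_combination (1+r*v)*hbsq - (1-r*v)*hbtq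
  have h2rv : (0:ℝ) ≤ 2*r*v := by positivity
  have e1 : 1 - v ≤ 1 - r^2*v^2 := by nlinarith [hrvsq]
  have hdiff0 : 0 ≤ bs - bt := by
    nlinarith [mul_pos (mul_pos hr0 hv0) hv1]
  constructor
  · nlinarith [mul_nonneg hdiff0 (sq_nonneg (r*v))]
  · exact le_of_mul_le_mul_right
      (by rw [hbsbt]; exact mul_le_mul_of_nonneg_left e1 h2rv) h63

lemma cube_bounds (v x y : ℝ) (hv0 : 0 < v) (hv8 : v ≤ 1/8)
    (hx : 1-2*v ≤ x) (hx1 : x ≤ 1) (hy : 1-2*v ≤ y) (hy1 : y ≤ 1) :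
    4-24*v ≤ (x+y)*(x^2+y^2) ∧ (x+y)*(x^2+y^2) ≤ 4 := by
  have hx0 : (0:ℝ) < x := by linarith
  have hy0 : (0:ℝ) < y := by linarith
  constructor
  · have h1 : 2-4*v ≤ x+y := by linarith
    have h2 : 2-8*v ≤ x^2+y^2 := by nlinarith
    nlinarith [mul_le_mul h1 h2 (by linarith) (by linarith : (0:ℝ) ≤ x+y), mul_pos hv0 hv0]
  · have h1 : x+y ≤ 2 := by linarith
    have h2 : x^2+y^2 ≤ 2 := by nlinarith
    nlinarith [mul_le_mul h1 h2 (by positivity) (by norm_num : (0:ℝ) ≤ 2)]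

lemma sqsq_bounds (v x y : ℝ) (hv0 : 0 < v) (hv8 : v ≤ 1/8)
    (hx : 1-2*v ≤ x) (hx1 : x ≤ 1) (hy : 1-2*v ≤ y) (hy1 : y ≤ 1) :
    1-8*v ≤ x^2*y^2 ∧ x^2*y^2 ≤ x := by
  have hx0 : (0:ℝ) < x := by linarith
  have hy0 : (0:ℝ) < y := by linarith
  constructor
  · have h1 : 1-4*v ≤ x*y := by nlinarith
    nlinarith [mul_le_mul h1 h1 (by linarith) (mul_pos hx0 hy0).le]
  · have h1 : y^2 ≤ 1 := by nlinarith
    have h2 : x^2*y^2 ≤ x^2*1 := mul_le_mul_of_nonneg_left h1 (sq_nonneg x)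
    nlinarith

lemma st4_bounds (r v : ℝ) (hr0 : 0 < r) (hr1 : r < 1) (hv0 : 0 < v) (hv8 : v ≤ 1/8) :
    -(8*r*v) ≤ (1-(1+r)*v)^4 - (1-(1-r)*v)^4 ∧
      (1-(1+r)*v)^4 - (1-(1-r)*v)^4 ≤ -(8*r*v) + 48*r*v^2 := by
  set t := 1-(1-r)*v with ht
  set s := 1-(1+r)*v with hs
  have ht_lt : t ≤ 1 := by rw [ht]; nlinarith
  have ht_ge : 1 - 2*v ≤ t := by rw [ht]; nlinarith
  have hs_lt : s ≤ 1 := by rw [hs]; nlinarith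
  have hs_ge : 1 - 2*v ≤ s := by rw [hs]; nlinarith
  obtain ⟨hF_lo, hF_hi⟩ := cube_bounds v t s hv0 hv8 ht_ge ht_lt hs_ge hs_lt
  have e_ts : s^4 - t^4 = -(2*(r*v))*((t+s)*(t^2+s^2)) := by rw [ht, hs]; ring
  clear_value t s
  clear ht hs
  constructor
  · rw [e_ts]
    nlinarith [mul_nonneg (mul_nonneg hr0.le hv0.le)
      (by linarith : (0:ℝ) ≤ 4 - (t+s)*(t^2+s^2))]
  · rw [e_ts]
    nlinarith [mul_nonneg (mul_nonneg hr0.le hv0.le)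
      (by linarith : (0:ℝ) ≤ (t+s)*(t^2+s^2) - (4-24*v))]

lemma b4_bounds (hr0 : 0 < r) (hr1 : r < 1) (hv0 : 0 < v) (hv8 : v ≤ 1/8)
    (hbtq : bt*(1+r*v) = 1-v) (hbsq : bs*(1-r*v) = 1-v) :
    8*r*v - 56*r*v^2 ≤ bs^4 - bt^4 ∧ bs^4 - bt^4 ≤ 8*r*v := by
  obtain ⟨hbt0, hbt_ge, hbt1⟩ := bt_facts hr0 hr1 hv0 hv8 hbtq
  obtain ⟨hbs0, hbs_ge, hbs1⟩ := bs_facts hr0 hr1 hv0 hv8 hbsq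
  obtain ⟨hdiff2, hdiff1⟩ := diff_facts hr0 hr1 hv0 hv8 hbtq hbsq
  obtain ⟨hG_lo, hG_hi⟩ := cube_bounds v bs bt hv0 hv8 (by linarith) hbs1 hbt_ge hbt1
  clear hbtq hbsq
  have hdiff0 : 0 ≤ bs - bt := by nlinarith
  have e_bs : bs^4 - bt^4 = (bs-bt)*((bs+bt)*(bs^2+bt^2)) := by ring
  have h2rv : (0:ℝ) ≤ 2*r*v := by positivity
  rw [e_bs]
  constructor
  · have h1 : (2*r*v - 2*r*v^2)*(4-24*v) ≤ (bs-bt)*((bs+bt)*(bs^2+bt^2)) := by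
      apply mul_le_mul hdiff2 hG_lo (by linarith) hdiff0
    nlinarith [h1, mul_nonneg (mul_nonneg hr0.le hv0.le) (mul_nonneg hv0.le hv0.le)]
  · calc (bs-bt)*((bs+bt)*(bs^2+bt^2)) ≤ (2*r*v)*4 := by
          apply mul_le_mul hdiff1 hG_hi (by positivity) h2rv
      _ = 8*r*v := by ring

lemma delta_bound (hr0 : 0 < r) (hr1 : r < 1) (hv0 : 0 < v) (hv8 : v ≤ 1/8)
    (hbtq : bt*(1+r*v) = 1-v) (hbsq : bs*(1-r*v) = 1-v) :
    0 ≤ (1-(1-r)*v)^2*(1-(1+r)*v)^2 - ((1-(1-r)*v)^4 + (1-(1+r)*v)^4)/2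
        + (bt^2*bs^2 - (bt^4+bs^4)/2) + 16*v^2 ∧
    (1-(1-r)*v)^2*(1-(1+r)*v)^2 - ((1-(1-r)*v)^4 + (1-(1+r)*v)^4)/2
        + (bt^2*bs^2 - (bt^4+bs^4)/2) ≤ 0 := by
  obtain ⟨hbt0, hbt_ge, hbt1⟩ := bt_facts hr0 hr1 hv0 hv8 hbtq
  obtain ⟨hbs0, hbs_ge, hbs1⟩ := bs_facts hr0 hr1 hv0 hv8 hbsq
  obtain ⟨hdiff2, hdiff1⟩ := diff_facts hr0 hr1 hv0 hv8 hbtq hbsq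
  clear hbtq hbsq
  set t := 1-(1-r)*v with ht
  set s := 1-(1+r)*v with hs
  have h_ts : t - s = 2*(r*v) := by rw [ht, hs]; ring
  have ht_lt : t ≤ 1 := by rw [ht]; nlinarith [mul_pos (show (0:ℝ) < 1-r by linarith) hv0]
  have hs_ge : 1 - 2*v ≤ s := by rw [hs]; nlinarith [mul_pos hr0 hv0]
  have hs_lt : s ≤ 1 := by rw [hs]; nlinarith [mul_pos (show (0:ℝ) < 1+r by linarith) hv0]
  clear_value t s
  clear ht hs
  have hid : t^2*s^2 - (t^4+s^4)/2 + (bt^2*bs^2 - (bt^4+bs^4)/2)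
      = -(((t^2-s^2)^2 + (bt^2-bs^2)^2)/2) := by ring
  rw [hid]
  have hsum4 : (t+s)^2 ≤ 4 := by
    nlinarith [mul_nonneg (show (0:ℝ) ≤ 2-(t+s) by linarith)
      (show (0:ℝ) ≤ 2+(t+s) by linarith)]
  have heqA : (t^2-s^2)^2 = 4*(r*v)^2*(t+s)^2 := by
    linear_combination ((t+s)^2*(t-s+2*(r*v)))*h_ts
  have hA : (t^2-s^2)^2 ≤ 16*r^2*v^2 := by
    nlinarith [heqA, mul_nonneg (sq_nonneg (r*v)) (sub_nonneg.mpr hsum4)]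
  have hdiff0 : (0:ℝ) ≤ bs - bt := by
    nlinarith [mul_nonneg (mul_pos hr0 hv0).le (show (0:ℝ) ≤ 1-v by linarith)]
  have h2rv : (0:ℝ) ≤ 2*r*v := by positivity
  have hsumb : bs + bt ≤ 2 := by linarith
  have hB1 : bs^2-bt^2 ≤ 4*r*v := by
    nlinarith [mul_le_mul hdiff1 hsumb (by linarith : (0:ℝ) ≤ bs+bt) h2rv]
  have hB0 : 0 ≤ bs^2-bt^2 := by
    nlinarith [mul_nonneg hdiff0 (by linarith : (0:ℝ) ≤ bs+bt)]
  have hB : (bt^2-bs^2)^2 ≤ 16*r^2*v^2 := by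
    nlinarith [mul_le_mul hB1 hB1 hB0 (by positivity : (0:ℝ) ≤ 4*r*v)]
  have hrv2 : r^2*v^2 ≤ v^2 := by
    nlinarith [mul_nonneg (mul_nonneg (show (0:ℝ) ≤ 1-r by linarith)
      (show (0:ℝ) ≤ 1+r by linarith)) (sq_nonneg v)]
  constructor
  · linarith [hA, hB, hrv2]
  · linarith [sq_nonneg (t^2-s^2), sq_nonneg (bt^2-bs^2)]

lemma num_bound (v Nt Ns Mm : ℝ) (hv0 : 0 < v) (hv8 : v ≤ 1/8)
    (hM_lo : 0 ≤ Mm)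
    (hM_hi : Mm ≤ 8*v) (hd_lo : -(28*v^2) ≤ Nt-Ns) (hd_hi : Nt-Ns ≤ 28*v^2)
    (hδ0 : 0 ≤ Mm-(Nt+Ns)/2) (hδhi : Mm-(Nt+Ns)/2 ≤ 8*v^2) :
    Mm^2 - Nt*Ns ≤ 280*v^3 := by
  have hid : Mm^2 - Nt*Ns = ((Nt-Ns)/2)^2
      + 2*((Mm-(Nt+Ns)/2)*Mm) - (Mm-(Nt+Ns)/2)^2 := by ring
  rw [hid]
  have h1 : ((Nt-Ns)/2)^2 ≤ 196*v^4 := by nlinarith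
  have h2 : (Mm-(Nt+Ns)/2)*Mm ≤ (8*v^2)*(8*v) :=
    mul_le_mul hδhi hM_hi hM_lo (by positivity)
  have h3 : (196:ℝ)*v^4 ≤ 25*v^3 := by nlinarith [pow_pos hv0 3]
  nlinarith [sq_nonneg (Mm-(Nt+Ns)/2)]

/-- The central estimate, assembled. -/
lemma main_est (r v t s bt bs : ℝ) (hr0 : 0 < r) (hr1 : r < 1)
    (hv0 : 0 < v) (hv8 : v ≤ 1/8)
    (ht : t = 1-(1-r)*v) (hs : s = 1-(1+r)*v)
    (hbtq : bt*(1+r*v) = 1-v) (hbsq : bs*(1-r*v) = 1-v) :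
    ((1-r)*v/2 ≤ 1 - (t^2*s^2+bt^2*bs^2)/2) ∧
    ((1 - (t^2*s^2+bt^2*bs^2)/2)^2
      - (1 - (t^4+bt^4)/2) * (1 - (s^4+bs^4)/2) ≤ 280*v^3) := by
  obtain ⟨hbt0, hbt_ge, hbt1⟩ := bt_facts hr0 hr1 hv0 hv8 hbtq
  obtain ⟨hbs0, hbs_ge, hbs1⟩ := bs_facts hr0 hr1 hv0 hv8 hbsq
  obtain ⟨hst4_lo, hst4_hi⟩ := st4_bounds r v hr0 hr1 hv0 hv8
  obtain ⟨hbs4_lo, hbs4_hi⟩ := b4_bounds hr0 hr1 hv0 hv8 hbtq hbsq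
  obtain ⟨hδ_lo, hδ_hi⟩ := delta_bound hr0 hr1 hv0 hv8 hbtq hbsq
  rw [← ht, ← hs] at hst4_lo hst4_hi hδ_lo hδ_hi
  have ht_lt : t ≤ 1 := by rw [ht]; nlinarith
  have ht_ge : 1 - 2*v ≤ t := by rw [ht]; nlinarith
  have hs_lt : s ≤ 1 := by rw [hs]; nlinarith
  have hs_ge : 1 - 2*v ≤ s := by rw [hs]; nlinarith
  have h1t : 1 - t = (1-r)*v := by rw [ht]; ring
  obtain ⟨hts_lo, hts_hi⟩ := sqsq_bounds v t s hv0 hv8 ht_ge ht_lt hs_ge hs_lt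
  obtain ⟨hbb_lo, hbb_hi⟩ := sqsq_bounds v bt bs hv0 hv8 hbt_ge hbt1 (by linarith) hbs1
  clear ht hs hbtq hbsq
  have hrv1 : r*v^2 ≤ v^2 := by nlinarith
  constructor
  · -- lower bound on M
    have hbb1 : bt^2*bs^2 ≤ 1 := by nlinarith [hbb_hi]
    nlinarith [hts_hi, hbb1, h1t]
  · have hM_lo0 : (0:ℝ) ≤ 1 - (t^2*s^2+bt^2*bs^2)/2 := by nlinarith [hts_hi, hbb_hi]
    have hM_hi : 1 - (t^2*s^2+bt^2*bs^2)/2 ≤ 8*v := by nlinarith [hts_lo, hbb_lo]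
    have hd_hi : (1 - (t^4+bt^4)/2) - (1 - (s^4+bs^4)/2) ≤ 28*v^2 := by
      nlinarith [hst4_lo, hbs4_hi, hrv1]
    have hd_lo : -(28*v^2) ≤ (1 - (t^4+bt^4)/2) - (1 - (s^4+bs^4)/2) := by
      nlinarith [hst4_hi, hbs4_lo, hrv1]
    have hδ0 : 0 ≤ (1 - (t^2*s^2+bt^2*bs^2)/2)
        - ((1 - (t^4+bt^4)/2) + (1 - (s^4+bs^4)/2))/2 := by linarith [hδ_hi]
    have hδhi : (1 - (t^2*s^2+bt^2*bs^2)/2)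
        - ((1 - (t^4+bt^4)/2) + (1 - (s^4+bs^4)/2))/2 ≤ 8*v^2 := by linarith [hδ_lo]
    exact num_bound v _ _ _ hv0 hv8 hM_lo0 hM_hi hd_lo hd_hi hδ0 hδhi
end Estimates

lemma aux_norm_le (s bs : ℝ) (h1 : 0 < s) (h2 : s < 1) (h3 : 0 < bs) (h4 : bs ≤ 1) :
    (s^4+bs^4)/2 ≤ 1 := by
  have a1 : s^2 ≤ 1 := by nlinarith
  have a2 : bs^2 ≤ 1 := by nlinarith
  have e1 : s^4 ≤ 1 := by nlinarith [mul_le_mul a1 a1 (sq_nonneg s) zero_le_one]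
  have e2 : bs^4 ≤ 1 := by nlinarith [mul_le_mul a2 a2 (sq_nonneg bs) zero_le_one]
  linarith

lemma aux_phd_bound (c v phd Mm P : ℝ) (hc0 : 0 < c) (hv0 : 0 < v)
    (hphd0 : 0 ≤ phd) (hMm2 : 2000*c^2*v^3 ≤ Mm^2) (e2 : phd^2*Mm^2 = Mm^2 - P)
    (hnum : Mm^2 - P ≤ 280*v^3) : phd^2*c^2 ≤ 14/100 := by
  nlinarith [mul_nonneg (sq_nonneg phd) (sub_nonneg.mpr hMm2), pow_pos hv0 3,
    mul_pos (mul_pos hc0 hc0) (pow_pos hv0 3), sq_nonneg phd]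

lemma aux_half_div (c d : ℝ) (hc0 : 0 < c) (hd : 1/2 ≤ d) : 1/(2*c) ≤ d/c := by
  rw [div_le_div_iff₀ (by positivity) hc0]
  nlinarith

lemma aux_last (c phd : ℝ) (hc0 : 0 < c) (h1 : 1/(2*c) ≤ phd)
    (hAc : phd^2*c^2 ≤ 14/100) : False := by
  have h2 : (1/(2*c))^2 ≤ phd^2 := by
    apply pow_le_pow_left₀ (by positivity) h1
  have h3 : (1/(2*c))^2 * c^2 = 1/4 := by field_simp; ring
  nlinarith [mul_le_mul_of_nonneg_right h2 (sq_nonneg c)]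

lemma aux_sq_mono (a b : ℝ) (h0 : 0 ≤ a) (h : a ≤ b) : a^2 ≤ b^2 := by nlinarith

/-- The embedding `G(z) = (z²/√2, b(z)²/√2)` of the disc into the ball of `ℂ²` (with
`b(z) = (z−r)/(1−rz)`, `r ∈ (0,1)`) is not bi-Lipschitz for the pseudohyperbolic
metrics. -/
theorem twisted_disc_not_biLipschitz (r : ℝ) (hr0 : 0 < r) (hr1 : r < 1)
    (b : ℂ → ℂ) (hbdef : ∀ z : ℂ, b z = (z - (r : ℂ)) / (1 - (r : ℂ) * z))
    (G : ℂ → EuclideanSpace ℂ (Fin 2))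
    (hGdef : ∀ z : ℂ, G z = (WithLp.equiv 2 (Fin 2 → ℂ)).symm
      ![((Real.sqrt 2 : ℂ))⁻¹ * z ^ 2, ((Real.sqrt 2 : ℂ))⁻¹ * (b z) ^ 2]) :
    ¬ ∃ c : ℝ, 1 ≤ c ∧ ∀ z ∈ ball (0 : ℂ) 1, ∀ w ∈ ball (0 : ℂ) 1,
        discDist z w / c ≤ pseudohyperbolicDist (G z) (G w) ∧
        pseudohyperbolicDist (G z) (G w) ≤ c * discDist z w := by
  rintro ⟨c, hc, h⟩
  have hc0 : (0:ℝ) < c := lt_of_lt_of_le one_pos hc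
  have h1r : (0:ℝ) < 1 - r := by linarith
  obtain ⟨v, hv⟩ : ∃ x:ℝ, x = (1-r)^2/(8000*c^2) := ⟨_, rfl⟩
  have hv0 : 0 < v := by rw [hv]; exact div_pos (pow_pos h1r 2) (by positivity)
  have hv8 : v ≤ 1/8 := by
    have hc2 : 1 ≤ c^2 := by nlinarith [hc, sq_nonneg (c-1)]
    have hr2 : (1-r)^2 ≤ 1 := by nlinarith
    rw [hv, div_le_iff₀ (by positivity)]
    linarith
  obtain ⟨t, ht⟩ : ∃ x:ℝ, x = 1-(1-r)*v := ⟨_, rfl⟩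
  obtain ⟨s, hs⟩ : ∃ x:ℝ, x = 1-(1+r)*v := ⟨_, rfl⟩
  have hrv : 0 < r*v := mul_pos hr0 hv0
  have hrvv : r*v ≤ v := by nlinarith [mul_pos (show (0:ℝ) < 1-r by linarith) hv0]
  have hp : (0:ℝ) < 1 + r*v := by linarith
  have hq : (0:ℝ) < 1 - r*v := by linarith
  obtain ⟨bt, hbt⟩ : ∃ x:ℝ, x = (1-v)/(1+r*v) := ⟨_, rfl⟩
  obtain ⟨bs, hbs⟩ : ∃ x:ℝ, x = (1-v)/(1-r*v) := ⟨_, rfl⟩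
  have hbtq : bt*(1+r*v) = 1-v := by rw [hbt]; field_simp
  have hbsq : bs*(1-r*v) = 1-v := by rw [hbs]; exact div_mul_cancel₀ _ hq.ne'
  obtain ⟨hbt0, hbt_ge, hbt1⟩ := bt_facts hr0 hr1 hv0 hv8 hbtq
  obtain ⟨hbs0, hbs_ge, hbs1⟩ := bs_facts hr0 hr1 hv0 hv8 hbsq
  obtain ⟨hM_lo, hnum⟩ := main_est r v t s bt bs hr0 hr1 hv0 hv8 ht hs hbtq hbsq
  have ht_lt : t < 1 := by rw [ht]; nlinarith [mul_pos h1r hv0]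
  have ht_ge : 1-2*v ≤ t := by rw [ht]; nlinarith
  have hs_lt : s < 1 := by rw [hs]; nlinarith [mul_pos (show (0:ℝ) < 1+r by linarith) hv0]
  have hs_ge : 1-2*v ≤ s := by rw [hs]; nlinarith
  have ht_pos : (0:ℝ) < t := by linarith
  have hs_pos : (0:ℝ) < s := by linarith
  -- the two special points
  have hG_at : ∀ x : ℝ, G (x:ℂ)
      = V ((Real.sqrt 2)⁻¹*x^2) ((Real.sqrt 2)⁻¹*((x-r)/(1-r*x))^2) := by
    intro x
    rw [hGdef, hbdef]
    apply congrArg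
    funext i
    fin_cases i <;> simp [V] <;> push_cast <;> ring
  have hden_t : 1 - r*t = (1-r)*(1+r*v) := by rw [ht]; ring
  have hden_s : 1 - r*(-s) = (1+r)*(1-r*v) := by rw [hs]; ring
  have e_t : ((t-r)/(1-r*t))^2 = bt^2 := by
    rw [hbt, div_pow, div_pow, div_eq_div_iff]
    · rw [ht]; ring
    · rw [hden_t]; positivity
    · positivity
  have e_s : ((-s-r)/(1-r*(-s)))^2 = bs^2 := by
    rw [hbs, div_pow, div_pow, div_eq_div_iff]
    · rw [hs]; ring
    · rw [hden_s]; positivity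
    · positivity
  have hGt : G ((t:ℝ):ℂ) = V ((Real.sqrt 2)⁻¹*t^2) ((Real.sqrt 2)⁻¹*bt^2) := by
    rw [hG_at t, e_t]
  have hGs : G ((-s:ℝ):ℂ) = V ((Real.sqrt 2)⁻¹*s^2) ((Real.sqrt 2)⁻¹*bs^2) := by
    rw [hG_at (-s), e_s, neg_sq]
  -- apply the distance formula
  have hhalf : ((Real.sqrt 2)⁻¹:ℝ)^2 = 1/2 := by
    rw [inv_pow, Real.sq_sqrt (by norm_num : (0:ℝ) ≤ 2)]
    norm_num
  have hnn : ((Real.sqrt 2)⁻¹*s^2)^2 + ((Real.sqrt 2)⁻¹*bs^2)^2 = (s^4+bs^4)/2 := by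
    linear_combination (s^4+bs^4)*hhalf
  have hmm : ((Real.sqrt 2)⁻¹*t^2)^2 + ((Real.sqrt 2)⁻¹*bt^2)^2 = (t^4+bt^4)/2 := by
    linear_combination (t^4+bt^4)*hhalf
  have hww : ((Real.sqrt 2)⁻¹*s^2)*((Real.sqrt 2)⁻¹*t^2)
      + ((Real.sqrt 2)⁻¹*bs^2)*((Real.sqrt 2)⁻¹*bt^2) = (t^2*s^2+bt^2*bs^2)/2 := by
    linear_combination (t^2*s^2+bt^2*bs^2)*hhalf
  have hsqrt2pos : (0:ℝ) < (Real.sqrt 2)⁻¹ := by positivity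
  have hMpos : (0:ℝ) < 1 - (t^2*s^2+bt^2*bs^2)/2 := by
    have : (0:ℝ) < (1-r)*v/2 := by positivity
    linarith
  have hform : (pseudohyperbolicDist (G ((t:ℝ):ℂ)) (G ((-s:ℝ):ℂ)))^2
      = 1 - (1 - (t^4+bt^4)/2) * (1 - (s^4+bs^4)/2) / (1 - (t^2*s^2+bt^2*bs^2)/2)^2 := by
    rw [hGt, hGs]
    rw [phd_formula _ _ _ _ (ne_of_gt (mul_pos hsqrt2pos (pow_pos hs_pos 2)))
      (by rw [hnn]; exact aux_norm_le s bs hs_pos hs_lt hbs0 hbs1)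
      (by rw [hww]; intro hcon; rw [hcon] at hMpos; simp at hMpos)]
    rw [hnn, hmm, hww]
  -- bound the distance
  have hveq2 : (1-r)^2*v^2/4 = 2000*c^2*v^3 := by
    have h8 : (8000:ℝ)*c^2 ≠ 0 := by positivity
    have hveq : v*(8000*c^2) = (1-r)^2 := by rw [hv, div_mul_cancel₀ _ h8]
    linear_combination (-(v^2)/4)*hveq
  have hMm2 : 2000*c^2*v^3 ≤ (1 - (t^2*s^2+bt^2*bs^2)/2)^2 := by
    rw [← hveq2]
    calc (1-r)^2*v^2/4 = ((1-r)*v/2)^2 := by ring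
      _ ≤ (1 - (t^2*s^2+bt^2*bs^2)/2)^2 := aux_sq_mono _ _ (by positivity) hM_lo
  set phd := pseudohyperbolicDist (G ((t:ℝ):ℂ)) (G ((-s:ℝ):ℂ)) with hphd
  have hphd0 : 0 ≤ phd := norm_nonneg _
  have e2 : phd^2 * (1 - (t^2*s^2+bt^2*bs^2)/2)^2
      = (1 - (t^2*s^2+bt^2*bs^2)/2)^2 - (1 - (t^4+bt^4)/2) * (1 - (s^4+bs^4)/2) := by
    rw [hform, sub_mul, one_mul, div_mul_cancel₀ _ (pow_ne_zero 2 (ne_of_gt hMpos))]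
  have hAc : phd^2*c^2 ≤ 14/100 :=
    aux_phd_bound c v phd _ _ hc0 hv0 hphd0 hMm2 e2 hnum
  -- the disc distance between t and -s is at least 1/2
  have hdd : discDist ((t:ℝ):ℂ) ((-s:ℝ):ℂ) = (t+s)/(1+s*t) := by
    have ee1 : ((t:ℝ):ℂ) - ((-s:ℝ):ℂ) = (((t+s:ℝ)):ℂ) := by push_cast; ring
    have ee2 : (1:ℂ) - (starRingEnd ℂ) ((-s:ℝ):ℂ) * ((t:ℝ):ℂ) = (((1+s*t:ℝ)):ℂ) := by
      rw [Complex.conj_ofReal]; push_cast; ring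
    rw [discDist, ee1, ee2, Complex.norm_real, Complex.norm_real,
      Real.norm_eq_abs, Real.norm_eq_abs, abs_of_pos (by linarith),
      abs_of_pos (by linarith [mul_pos hs_pos ht_pos])]
  have hst1 : s*t ≤ 1 := by
    calc s*t ≤ 1*1 := mul_le_mul hs_lt.le ht_lt.le ht_pos.le zero_le_one
      _ = 1 := by ring
  have hdd_ge : 1/2 ≤ discDist ((t:ℝ):ℂ) ((-s:ℝ):ℂ) := by
    rw [hdd, le_div_iff₀ (by linarith [mul_pos hs_pos ht_pos])]
    linarith [hst1]
  -- membership in the ball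
  have hmem_t : ((t:ℝ):ℂ) ∈ ball (0 : ℂ) 1 := by
    rw [mem_ball_zero_iff, Complex.norm_real, Real.norm_eq_abs, abs_of_pos ht_pos]
    exact ht_lt
  have hmem_s : ((-s:ℝ):ℂ) ∈ ball (0 : ℂ) 1 := by
    rw [mem_ball_zero_iff, Complex.norm_real, Real.norm_eq_abs,
      abs_of_neg (by linarith : (-s:ℝ) < 0)]
    linarith
  -- contradiction
  obtain ⟨hlow, -⟩ := h _ hmem_t _ hmem_s
  rw [← hphd] at hlow
  have h1 : 1/(2*c) ≤ phd :=
    le_trans (aux_half_div c _ hc0 hdd_ge) hlow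
  exact aux_last c phd hc0 h1 hAc

end
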